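/- Assume λθ > Nμ. Let Δ₀ = arccos(-Nμ/(λθ))·sqrt(N²/(λ²θ² - N²μ²)). If δ* ∈ (0, N/(λθ)) satisfies 1/(1+δ*μ) = δ*λ²θ²Δ_cr(δ*)/(N² - δ*²λ²θ²), then δ* < δ₂, where δ₂ = (-Δ₀λθ + sqrt(λ²θ²Δ₀² + 4N²Δ₀μ + 4N²))/(2λθ(1 + Δ₀μ)). -/

import Mathlib

open Real Set

noncomputable def Dcr (lam mu th : ℝ) (N : ℕ) (d : ℝ) : ℝ :=
  Real.arccos (-(d * lam^2 * th^2 + (N : ℝ)^2 * mu) / ((N : ℝ) * lam * th * (1 + d * mu))) *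
    Real.sqrt (((N : ℝ)^2 - d^2 * lam^2 * th^2) / (lam^2 * th^2 - (N : ℝ)^2 * mu^2))

set_option maxHeartbeats 2000000 in
theorem dmax_upper_bound
    (lam mu th : ℝ) (N : ℕ) (hN : 0 < N)
    (hlam : 0 < lam) (hmu : 0 < mu) (hth : 0 < th)
    (hgt : lam * th > N * mu)
    (dstar : ℝ) (hdstar : dstar ∈ Set.Ioo (0 : ℝ) ((N : ℝ) / (lam * th)))
    (hcrit : 1 / (1 + dstar * mu)
        = dstar * lam^2 * th^2 * Dcr lam mu th N dstar
          / ((N : ℝ)^2 - dstar^2 * lam^2 * th^2)) :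
    dstar <
      (-(Real.arccos (-((N : ℝ) * mu) / (lam * th)) *
            Real.sqrt ((N : ℝ)^2 / (lam^2 * th^2 - (N : ℝ)^2 * mu^2))) * lam * th
        + Real.sqrt (lam^2 * th^2 *
              (Real.arccos (-((N : ℝ) * mu) / (lam * th)) *
                Real.sqrt ((N : ℝ)^2 / (lam^2 * th^2 - (N : ℝ)^2 * mu^2)))^2
            + 4 * (N : ℝ)^2 * (Real.arccos (-((N : ℝ) * mu) / (lam * th)) *
                Real.sqrt ((N : ℝ)^2 / (lam^2 * th^2 - (N : ℝ)^2 * mu^2))) * mu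
            + 4 * (N : ℝ)^2))
      / (2 * lam * th * (1 + (Real.arccos (-((N : ℝ) * mu) / (lam * th)) *
            Real.sqrt ((N : ℝ)^2 / (lam^2 * th^2 - (N : ℝ)^2 * mu^2))) * mu)) := by
  obtain ⟨hd0, hdlt⟩ := hdstar
  have hNpos : (0:ℝ) < (N:ℝ) := by exact_mod_cast hN
  have hLpos : 0 < lam * th := mul_pos hlam hth
  have hNmu : 0 < (N:ℝ) * mu := mul_pos hNpos hmu
  have hK : 0 < lam^2*th^2 - (N:ℝ)^2*mu^2 := by nlinarith
  have hdL : dstar * (lam*th) < (N:ℝ) := by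
    rw [lt_div_iff₀ hLpos] at hdlt; linarith
  set g : ℝ → ℝ := fun d =>
    -(d * lam^2 * th^2 + (N : ℝ)^2 * mu) / ((N : ℝ) * lam * th * (1 + d * mu)) with hgdef
  set q : ℝ → ℝ := fun d => ((N : ℝ)^2 - d^2 * lam^2 * th^2) / (lam^2*th^2 - (N:ℝ)^2*mu^2) with hqdef
  set F : ℝ → ℝ := fun d => Real.arccos (g d) * Real.sqrt (q d) with hFdef
  have hDF : ∀ d, Dcr lam mu th N d = F d := fun d => rfl
  -- basic positivity facts on [0, dstar]
  have hT : ∀ x : ℝ, 0 ≤ x → (0:ℝ) < 1 + x*mu := fun x hx => by nlinarith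
  have hden : ∀ x : ℝ, 0 ≤ x → (0:ℝ) < (N:ℝ) * lam * th * (1 + x * mu) := by
    intro x hx
    have := hT x hx
    positivity
  have hNx : ∀ x : ℝ, 0 ≤ x → x ≤ dstar → 0 < (N:ℝ)^2 - x^2*lam^2*th^2 := by
    intro x hx hxd
    have h1 : x * (lam*th) < (N:ℝ) := by nlinarith
    have h2 : 0 < (N:ℝ) + x*(lam*th) := by nlinarith [mul_nonneg hx hLpos.le]
    nlinarith [mul_pos (sub_pos.2 h1) h2]
  have hqpos : ∀ x : ℝ, 0 ≤ x → x ≤ dstar → 0 < q x := by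
    intro x hx hxd
    have := hNx x hx hxd
    simp only [hqdef]
    apply div_pos _ hK
    nlinarith
  have hgm1 : ∀ x : ℝ, 0 ≤ x → x ≤ dstar → -1 < g x := by
    intro x hx hxd
    have hd := hden x hx
    simp only [hgdef]
    rw [neg_div, neg_lt_neg_iff, div_lt_one hd]
    have h1 : x * (lam*th) < (N:ℝ) := by nlinarith
    nlinarith [mul_pos (sub_pos.2 hgt) (sub_pos.2 h1)]
  have hg1 : ∀ x : ℝ, 0 ≤ x → x ≤ dstar → g x < 1 := by
    intro x hx hxd
    have hd := hden x hx
    have : g x < 0 := by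
      simp only [hgdef]
      apply div_neg_of_neg_of_pos _ hd
      nlinarith [mul_nonneg (mul_nonneg hx (sq_nonneg lam)) (sq_nonneg th)]
    linarith
  have hgmono : ∀ x : ℝ, 0 ≤ x → x ≤ dstar → g dstar ≤ g x := by
    intro x hx hxd
    simp only [hgdef]
    rw [div_le_div_iff₀ (hden dstar hd0.le) (hden x hx)]
    nlinarith [mul_nonneg (mul_nonneg (mul_nonneg hNpos.le hLpos.le) (sub_nonneg.2 hxd)) hK.le]
  have harccos_mono : ∀ a b : ℝ, a ≤ b → Real.arccos b ≤ Real.arccos a := by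
    intro a b hab
    simp only [Real.arccos_eq_pi_div_two_sub_arcsin]
    have := Real.monotone_arcsin hab
    linarith
  -- rewrite the critical equation
  have hqds := hqpos dstar hd0.le le_rfl
  have hsq_ds : Real.sqrt (q dstar) > 0 := Real.sqrt_pos.2 hqds
  have hNd : (N:ℝ)^2 - dstar^2*lam^2*th^2 = (lam^2*th^2 - (N:ℝ)^2*mu^2) * q dstar := by
    simp only [hqdef]
    field_simp
  have hsqq : Real.sqrt (q dstar) * Real.sqrt (q dstar) = q dstar := Real.mul_self_sqrt hqds.le
  have hB := hNx dstar hd0.le le_rfl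
  have hKS : ((lam^2*th^2 - (N:ℝ)^2*mu^2) * Real.sqrt (q dstar)) ≠ 0 :=
    ne_of_gt (mul_pos hK hsq_ds)
  have hcrit' : 1 / (1 + dstar * mu)
      = Real.arccos (g dstar) * dstar * (lam^2*th^2) / ((lam^2*th^2 - (N:ℝ)^2*mu^2) * Real.sqrt (q dstar)) := by
    rw [hcrit]
    simp only [hDF, hFdef]
    rw [div_eq_div_iff (ne_of_gt hB) hKS]
    linear_combination (dstar * lam^2*th^2 * Real.arccos (g dstar) * (lam^2*th^2 - (N:ℝ)^2*mu^2)) * hsqq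
      - (dstar*lam^2*th^2*Real.arccos (g dstar)) * hNd
  -- the derivative of F
  have hderivF : ∀ x ∈ Set.Ioo (0:ℝ) dstar, HasDerivAt F
      (1/(1+x*mu) - Real.arccos (g x) * x * (lam^2*th^2) / ((lam^2*th^2 - (N:ℝ)^2*mu^2) * Real.sqrt (q x))) x := by
    intro x hx
    obtain ⟨hx0, hxd⟩ := hx
    have hTx := hT x hx0.le
    have hdx := hden x hx0.le
    have hqx := hqpos x hx0.le hxd.le
    have hsqx : 0 < Real.sqrt (q x) := Real.sqrt_pos.2 hqx
    have hgm := hgm1 x hx0.le hxd.le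
    have hg1' := hg1 x hx0.le hxd.le
    -- derivative of g
    have hnum : HasDerivAt (fun d : ℝ => -(d * lam^2 * th^2 + (N:ℝ)^2*mu)) (-(lam^2*th^2)) x := by
      have := ((((hasDerivAt_id x).mul_const (lam^2)).mul_const (th^2)).add_const ((N:ℝ)^2*mu)).neg
      exact this.congr_deriv (by ring)
    have hdenD : HasDerivAt (fun d : ℝ => (N:ℝ)*lam*th*(1+d*mu)) ((N:ℝ)*lam*th*mu) x := by
      have := (((hasDerivAt_id x).mul_const mu).const_add 1).const_mul ((N:ℝ)*lam*th)
      simpa using this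
    have hg' : HasDerivAt g (-((lam^2*th^2 - (N:ℝ)^2*mu^2)/((N:ℝ)*lam*th*(1+x*mu)^2))) x := by
      have h := hnum.div hdenD (ne_of_gt hdx)
      refine h.congr_deriv ?_
      field_simp
      ring
    -- derivative of arccos ∘ g
    have hA : HasDerivAt (fun d => Real.arccos (g d))
        (-(1 / Real.sqrt (1 - g x ^ 2)) * -((lam^2*th^2 - (N:ℝ)^2*mu^2)/((N:ℝ)*lam*th*(1+x*mu)^2))) x := by
      have := (Real.hasDerivAt_arccos (ne_of_gt hgm) (ne_of_lt hg1')).comp x hg'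
      exact this
    -- derivative of q
    have hq' : HasDerivAt q (-(2*x*lam^2*th^2)/(lam^2*th^2 - (N:ℝ)^2*mu^2)) x := by
      have h1 : HasDerivAt (fun d : ℝ => (N:ℝ)^2 - d^2*lam^2*th^2) (-(2*x*lam^2*th^2)) x := by
        have := (((hasDerivAt_pow 2 x).mul_const (lam^2)).mul_const (th^2)).const_sub ((N:ℝ)^2)
        exact this.congr_deriv (by ring)
      exact h1.div_const (lam^2*th^2 - (N:ℝ)^2*mu^2)
    have hS : HasDerivAt (fun d => Real.sqrt (q d))
        ((-(2*x*lam^2*th^2)/(lam^2*th^2 - (N:ℝ)^2*mu^2)) / (2 * Real.sqrt (q x))) x := hq'.sqrt (ne_of_gt hqx)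
    have hprod := hA.mul hS
    refine hprod.congr_deriv ?_
    have hsq1 : Real.sqrt (1 - g x ^ 2)
        = (lam^2*th^2 - (N:ℝ)^2*mu^2) * Real.sqrt (q x) / ((N:ℝ)*lam*th*(1+x*mu)) := by
      have h1 : 1 - g x ^ 2 = ((lam^2*th^2 - (N:ℝ)^2*mu^2)/((N:ℝ)*lam*th*(1+x*mu)))^2 * q x := by
        simp only [hgdef, hqdef]
        field_simp
        ring
      rw [h1, Real.sqrt_mul (sq_nonneg _), Real.sqrt_sq (by positivity)]
      ring
    rw [hsq1]
    field_simp
    ring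
  -- derivative positive on the open interval
  have hpos : ∀ x ∈ Set.Ioo (0:ℝ) dstar,
      0 < 1/(1+x*mu) - Real.arccos (g x) * x * (lam^2*th^2) / ((lam^2*th^2 - (N:ℝ)^2*mu^2) * Real.sqrt (q x)) := by
    intro x hx
    obtain ⟨hx0, hxd⟩ := hx
    have hqx := hqpos x hx0.le hxd.le
    have hsqx : 0 < Real.sqrt (q x) := Real.sqrt_pos.2 hqx
    have h1 : 1 / (1 + dstar*mu) < 1 / (1 + x*mu) := by
      apply one_div_lt_one_div_of_lt (hT x hx0.le)
      nlinarith
    have hAle : Real.arccos (g x) ≤ Real.arccos (g dstar) :=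
      harccos_mono _ _ (hgmono x hx0.le hxd.le)
    have hsqle : Real.sqrt (q dstar) ≤ Real.sqrt (q x) := by
      apply Real.sqrt_le_sqrt
      simp only [hqdef]
      gcongr <;> nlinarith
    have hL2 : (0:ℝ) ≤ lam^2*th^2 := by positivity
    have hnumle : Real.arccos (g x) * x * (lam^2*th^2)
        ≤ Real.arccos (g dstar) * dstar * (lam^2*th^2) :=
      mul_le_mul_of_nonneg_right
        (mul_le_mul (harccos_mono _ _ (hgmono x hx0.le hxd.le)) hxd.le hx0.le
          (Real.arccos_nonneg _)) hL2
    have hnumnn : (0:ℝ) ≤ Real.arccos (g dstar) * dstar * (lam^2*th^2) :=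
      mul_nonneg (mul_nonneg (Real.arccos_nonneg _) hd0.le) hL2
    have hdenle : (lam^2*th^2 - (N:ℝ)^2*mu^2) * Real.sqrt (q dstar)
        ≤ (lam^2*th^2 - (N:ℝ)^2*mu^2) * Real.sqrt (q x) :=
      mul_le_mul_of_nonneg_left hsqle hK.le
    have h2 : Real.arccos (g x) * x * (lam^2*th^2) / ((lam^2*th^2 - (N:ℝ)^2*mu^2) * Real.sqrt (q x))
        ≤ Real.arccos (g dstar) * dstar * (lam^2*th^2) / ((lam^2*th^2 - (N:ℝ)^2*mu^2) * Real.sqrt (q dstar)) :=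
      div_le_div₀ hnumnn hnumle (mul_pos hK hsq_ds) hdenle
    rw [hcrit'] at h1
    linarith
  -- continuity of F on [0, dstar]
  have hcont : ContinuousOn F (Set.Icc 0 dstar) := by
    simp only [hFdef]
    apply ContinuousOn.mul
    · apply Real.continuous_arccos.comp_continuousOn
      simp only [hgdef]
      apply ContinuousOn.div
      · fun_prop
      · fun_prop
      · exact fun x hx => ne_of_gt (hden x hx.1)
    · apply Real.continuous_sqrt.comp_continuousOn
      simp only [hqdef]
      fun_prop
  -- strict monotonicity
  have hmono : StrictMonoOn F (Set.Icc 0 dstar) := by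
    apply strictMonoOn_of_deriv_pos (convex_Icc 0 dstar) hcont
    intro x hx
    rw [interior_Icc] at hx
    rw [(hderivF x hx).deriv]
    exact hpos x hx
  have hF0lt : F 0 < F dstar :=
    hmono (Set.left_mem_Icc.2 hd0.le) (Set.right_mem_Icc.2 hd0.le) hd0
  -- value at zero
  have hg0 : g 0 = -((N:ℝ)*mu)/(lam*th) := by
    simp only [hgdef]
    field_simp
    ring
  have hq0 : q 0 = (N:ℝ)^2/(lam^2*th^2 - (N:ℝ)^2*mu^2) := by
    simp only [hqdef]
    norm_num
  have hF0 : F 0 = Real.arccos (-((N:ℝ)*mu)/(lam*th)) * Real.sqrt ((N:ℝ)^2/(lam^2*th^2 - (N:ℝ)^2*mu^2)) := by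
    simp only [hFdef, hg0, hq0]
  set D0 := Real.arccos (-((N:ℝ)*mu)/(lam*th)) * Real.sqrt ((N:ℝ)^2/(lam^2*th^2 - (N:ℝ)^2*mu^2)) with hD0def
  have hD0 : 0 ≤ D0 := mul_nonneg (Real.arccos_nonneg _) (Real.sqrt_nonneg _)
  have hD0lt : D0 < F dstar := by rw [← hF0]; exact hF0lt
  -- the key quadratic inequality
  have h5 : (N:ℝ)^2 - dstar^2*lam^2*th^2 = dstar*lam^2*th^2*(F dstar)*(1+dstar*mu) := by
    have h := hcrit
    rw [hDF] at h
    rw [div_eq_div_iff (ne_of_gt (hT dstar hd0.le)) (ne_of_gt hB)] at h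
    linear_combination h
  -- key quadratic inequality
  have hkey : dstar^2*lam^2*th^2 + D0*(dstar*lam^2*th^2*(1+dstar*mu)) < (N:ℝ)^2 := by
    have hpos' : 0 < dstar*lam^2*th^2*(1+dstar*mu) := by
      have := hT dstar hd0.le
      positivity
    nlinarith [mul_pos hpos' (sub_pos.2 hD0lt), h5]
  -- solve the quadratic
  set s := Real.sqrt (lam^2*th^2*D0^2 + 4*(N:ℝ)^2*D0*mu + 4*(N:ℝ)^2) with hsdef
  have hargnn : (0:ℝ) ≤ lam^2*th^2*D0^2 + 4*(N:ℝ)^2*D0*mu + 4*(N:ℝ)^2 := by positivity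
  have hs2 : s^2 = lam^2*th^2*D0^2 + 4*(N:ℝ)^2*D0*mu + 4*(N:ℝ)^2 := Real.sq_sqrt hargnn
  have hsnn : 0 ≤ s := Real.sqrt_nonneg _
  have hTD : (0:ℝ) < 1 + D0*mu := by nlinarith [mul_nonneg hD0 hmu.le]
  rw [lt_div_iff₀ (by positivity : (0:ℝ) < 2*lam*th*(1+D0*mu))]
  have hkey' : 0 < (N:ℝ)^2 - (dstar^2*lam^2*th^2 + D0*(dstar*lam^2*th^2*(1+dstar*mu))) := by
    linarith
  have hsqlt : (dstar * (2*lam*th*(1+D0*mu)) + D0*lam*th)^2 < s^2 := by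
    rw [hs2]
    nlinarith [mul_pos hTD hkey']
  have hlt : dstar * (2*lam*th*(1+D0*mu)) + D0*lam*th < s :=
    lt_of_pow_lt_pow_left₀ 2 hsnn hsqlt
  nlinarith [hlt]
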